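/- Let Φ : ℝⁿ × [0,T] → ℝⁿ be measurable in t and, for an integrable γ : [0,T] → ℝ≥0, satisfy ‖Φ(x,t) - Φ(y,t)‖ ≤ γ(t)‖x-y‖ for all x, y and t. If x₁, x₂ : [0,T] → ℝⁿ are two absolutely continuous solutions of the perturbed sweeping process ẋ(t) ∈ Φ(x(t),t) - N_{x(t)}𝒳(t), x(t) ∈ 𝒳(t), with x₁(0) = x₂(0), where each 𝒳(t) is nonempty closed convex, then x₁ = x₂ on [0,T]. -/

import Mathlib

open MeasureTheory
open scoped RealInnerProductSpace

lemma sq_norm_primitive {E : Type*} [NormedAddCommGroup E] [InnerProductSpace ℝ E]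
    [CompleteSpace E] {v : ℝ → E} {t : ℝ} (ht : 0 ≤ t)
    (hv : IntegrableOn v (Set.Icc 0 t)) :
    ‖∫ u in (0:ℝ)..t, v u‖ ^ 2 =
      2 * ∫ s in (0:ℝ)..t, ⟪v s, ∫ u in (0:ℝ)..s, v u⟫ := by
  set μ : Measure ℝ := volume.restrict (Set.Ioc 0 t) with hμ
  have hvμ : Integrable v μ := hv.mono_set Set.Ioc_subset_Icc_self
  set D : ℝ → E := fun s => ∫ u in (0:ℝ)..s, v u with hD
  have hD_Ioc : ∀ s, 0 ≤ s → D s = ∫ u in Set.Ioc 0 s, v u := fun s hs =>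
    intervalIntegral.integral_of_le hs
  have hDc : ContinuousOn D (Set.Icc 0 t) :=
    (intervalIntegral.continuousOn_primitive hv).congr fun s hs => hD_Ioc s hs.1
  obtain ⟨C, hC⟩ : ∃ C, ∀ s ∈ Set.Icc (0:ℝ) t, ‖D s‖ ≤ C :=
    isCompact_Icc.exists_bound_of_continuousOn hDc
  have hC0 : 0 ≤ C := le_trans (norm_nonneg _) (hC 0 ⟨le_rfl, ht⟩)
  have hDm : AEStronglyMeasurable D μ :=
    (hDc.aestronglyMeasurable measurableSet_Icc).mono_measure
      (Measure.restrict_mono Set.Ioc_subset_Icc_self le_rfl)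
  have hinner : Integrable (fun s => ⟪v s, D s⟫) μ := by
    refine Integrable.mono (hvμ.norm.mul_const C)
      (hvμ.aestronglyMeasurable.inner hDm) ?_
    filter_upwards [ae_restrict_mem measurableSet_Ioc] with s hs
    rw [Real.norm_of_nonneg (by positivity : (0:ℝ) ≤ ‖v s‖ * C), Real.norm_eq_abs]
    exact (abs_real_inner_le_norm _ _).trans
      (mul_le_mul_of_nonneg_left (hC s ⟨hs.1.le, hs.2⟩) (norm_nonneg _))
  set J : ℝ := ∫ s, ⟪v s, D s⟫ ∂μ with hJ
  set F : ℝ × ℝ → ℝ := fun p => if p.2 ≤ p.1 then ⟪v p.1, v p.2⟫ else 0 with hF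
  -- integrability of F on the product
  have hFm : AEStronglyMeasurable F (μ.prod μ) := by
    have h1 : AEStronglyMeasurable (fun p : ℝ × ℝ => ⟪v p.1, v p.2⟫) (μ.prod μ) :=
      (hvμ.aestronglyMeasurable.comp_fst : AEStronglyMeasurable (fun p : ℝ × ℝ => v p.1) (μ.prod μ)).inner
        (hvμ.aestronglyMeasurable.comp_snd : AEStronglyMeasurable (fun p : ℝ × ℝ => v p.2) (μ.prod μ))
    have hs : MeasurableSet {p : ℝ × ℝ | p.2 ≤ p.1} :=
      (isClosed_le continuous_snd continuous_fst).measurableSet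
    have : F = Set.indicator {p : ℝ × ℝ | p.2 ≤ p.1}
        (fun p => ⟪v p.1, v p.2⟫) := by
      ext p; simp [hF, Set.indicator_apply]
    rw [this]; exact h1.indicator hs
  have hFint : Integrable F (μ.prod μ) := by
    refine Integrable.mono (hvμ.norm.mul_prod hvμ.norm) hFm ?_
    filter_upwards with p
    rw [Real.norm_of_nonneg (by positivity : (0:ℝ) ≤ ‖v p.1‖ * ‖v p.2‖)]
    by_cases h : p.2 ≤ p.1
    · rw [hF]; simp only [if_pos h, Real.norm_eq_abs]
      exact abs_real_inner_le_norm _ _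
    · rw [hF]; simp only [if_neg h, norm_zero]; positivity
  -- step 1 : J equals the iterated integral of F
  have step1 : J = ∫ s, (∫ u, F (s, u) ∂μ) ∂μ := by
    refine integral_congr_ae ?_
    filter_upwards [ae_restrict_mem measurableSet_Ioc] with s hs
    have h1 : D s = ∫ u in Set.Ioc 0 s, v u := hD_Ioc s hs.1.le
    have h2 : (∫ u in Set.Ioc 0 s, v u) = ∫ u, (Set.Ioc 0 s).indicator v u ∂μ := by
      rw [integral_indicator measurableSet_Ioc, hμ,
        Measure.restrict_restrict measurableSet_Ioc,
        Set.inter_eq_self_of_subset_left (Set.Ioc_subset_Ioc_right hs.2)]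
    rw [h1, h2, ← integral_inner (hvμ.indicator measurableSet_Ioc) (v s)]
    refine integral_congr_ae ?_
    filter_upwards [ae_restrict_mem measurableSet_Ioc] with u hu
    by_cases h : u ≤ s
    · rw [Set.indicator_of_mem (Set.mem_Ioc.2 ⟨hu.1, h⟩)]; simp [hF, if_pos h]
    · rw [Set.indicator_of_notMem (fun hmem => h hmem.2)]
      simp [hF, if_neg h]
  -- step 2 : swap
  have step2 : (∫ s, (∫ u, F (s, u) ∂μ) ∂μ) = ∫ u, (∫ s, F (s, u) ∂μ) ∂μ :=
    integral_integral_swap hFint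
  -- interval integrability helpers
  have hvt : IntervalIntegrable v volume 0 t := by
    rw [intervalIntegrable_iff_integrableOn_Ioc_of_le ht]
    exact hv.mono_set Set.Ioc_subset_Icc_self
  -- step 3 : inner integral evaluation
  have step3 : (∫ u, (∫ s, F (s, u) ∂μ) ∂μ) = ∫ u, ⟪D t - D u, v u⟫ ∂μ := by
    refine integral_congr_ae ?_
    filter_upwards [ae_restrict_mem measurableSet_Ioc] with u hu
    have hvu : IntervalIntegrable v volume 0 u := by
      rw [intervalIntegrable_iff_integrableOn_Ioc_of_le hu.1.le]
      exact hv.mono_set ((Set.Ioc_subset_Ioc_right hu.2).trans Set.Ioc_subset_Icc_self)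
    have e1 : (∫ s, F (s, u) ∂μ) = ∫ s, ⟪v u, (Set.Ici u).indicator v s⟫ ∂μ := by
      refine integral_congr_ae (Filter.Eventually.of_forall fun s => ?_)
      show F (s, u) = ⟪v u, (Set.Ici u).indicator v s⟫
      by_cases h : u ≤ s
      · rw [Set.indicator_of_mem (Set.mem_Ici.2 h)]
        simp [hF, if_pos h, real_inner_comm]
      · rw [Set.indicator_of_notMem (fun hm => h (Set.mem_Ici.1 hm))]
        simp [hF, if_neg h]
    have e2 : (∫ s, (Set.Ici u).indicator v s ∂μ) = D t - D u := by
      rw [integral_indicator measurableSet_Ici, hμ,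
        Measure.restrict_restrict measurableSet_Ici]
      have hset : Set.Ici u ∩ Set.Ioc 0 t = Set.Icc u t := by
        ext s
        constructor
        · rintro ⟨h1, _, h3⟩; exact ⟨h1, h3⟩
        · rintro ⟨h1, h2⟩; exact ⟨h1, lt_of_lt_of_le hu.1 h1, h2⟩
      rw [hset, MeasureTheory.integral_Icc_eq_integral_Ioc,
        ← intervalIntegral.integral_of_le hu.2,
        ← intervalIntegral.integral_interval_sub_left hvt hvu]
    rw [e1, integral_inner (hvμ.indicator measurableSet_Ici) (v u), e2,
      real_inner_comm]
  -- step 4 : split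
  have hDt : D t = ∫ u, v u ∂μ := hD_Ioc t ht
  have step4 : (∫ u, ⟪D t - D u, v u⟫ ∂μ) = ‖D t‖ ^ 2 - J := by
    have e : ∀ u, ⟪D t - D u, v u⟫ = ⟪D t, v u⟫ - ⟪v u, D u⟫ := by
      intro u; rw [inner_sub_left, real_inner_comm (D u)]
    simp_rw [e]
    rw [integral_sub (hvμ.const_inner (D t)) hinner, integral_inner hvμ (D t),
      ← hDt, real_inner_self_eq_norm_sq]
  have key : J = ‖D t‖ ^ 2 - J := step1.trans (step2.trans (step3.trans step4))
  have hout : (∫ s in (0:ℝ)..t, ⟪v s, D s⟫) = J :=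
    intervalIntegral.integral_of_le ht
  rw [hout]
  linarith [key]


lemma gronwall_zero {T : ℝ} (hT : 0 ≤ T) {g β : ℝ → ℝ}
    (hgnn : ∀ t ∈ Set.Icc (0:ℝ) T, 0 ≤ g t)
    (hgc : ContinuousOn g (Set.Icc 0 T))
    (hβnn : ∀ t, 0 ≤ β t)
    (hβ : IntegrableOn β (Set.Icc 0 T))
    (hβg : IntegrableOn (fun s => β s * g s) (Set.Icc 0 T))
    (hineq : ∀ t ∈ Set.Icc (0:ℝ) T, g t ≤ ∫ s in (0:ℝ)..t, β s * g s) :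
    ∀ t ∈ Set.Icc (0:ℝ) T, g t = 0 := by
  set A : Set ℝ := {a ∈ Set.Icc (0:ℝ) T | ∀ s ∈ Set.Icc (0:ℝ) a, g s = 0} with hA
  have hg0 : g 0 = 0 := by
    have h1 := hineq 0 ⟨le_rfl, hT⟩
    simp only [intervalIntegral.integral_same] at h1
    exact le_antisymm h1 (hgnn 0 ⟨le_rfl, hT⟩)
  have h0A : 0 ∈ A := by
    refine ⟨⟨le_rfl, hT⟩, fun s hs => ?_⟩
    rw [Set.Icc_self] at hs; rw [hs]; exact hg0
  have bddA : BddAbove A := ⟨T, fun a ha => ha.1.2⟩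
  have hAne : A.Nonempty := ⟨0, h0A⟩
  set c := sSup A with hcdef
  have hc0 : 0 ≤ c := le_csSup bddA h0A
  have hcT : c ≤ T := csSup_le hAne fun a ha => ha.1.2
  have hzero_lt : ∀ s, 0 ≤ s → s < c → g s = 0 := by
    intro s hs0 hsc
    obtain ⟨a, haA, hsa⟩ := exists_lt_of_lt_csSup hAne hsc
    exact haA.2 s ⟨hs0, hsa.le⟩
  have hint0 : (∫ s in (0:ℝ)..c, β s * g s) = 0 := by
    rw [intervalIntegral.integral_of_le hc0]
    apply integral_eq_zero_of_ae
    have hne : ∀ᵐ (s : ℝ) ∂volume, s ≠ c := by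
      rw [ae_iff]
      have : {s : ℝ | ¬s ≠ c} = {c} := by ext s; simp
      rw [this]; exact Real.volume_singleton
    filter_upwards [ae_restrict_mem measurableSet_Ioc, ae_restrict_of_ae hne]
      with s hs hne'
    have : s < c := lt_of_le_of_ne hs.2 hne'
    simp [hzero_lt s hs.1.le this]
  have hgc0 : g c = 0 :=
    le_antisymm ((hineq c ⟨hc0, hcT⟩).trans hint0.le) (hgnn c ⟨hc0, hcT⟩)
  have hcA : c ∈ A := by
    refine ⟨⟨hc0, hcT⟩, fun s hs => ?_⟩
    rcases eq_or_lt_of_le hs.2 with h | h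
    · rw [h]; exact hgc0
    · exact hzero_lt s hs.1 h
  -- claim c = T
  have hceq : c = T := by
    by_contra hne
    have hlt : c < T := lt_of_le_of_ne hcT hne
    set H : ℝ → ℝ := fun x => ∫ s in Set.Ioc c x, β s with hH
    have hHc : ContinuousOn H (Set.Icc c T) :=
      intervalIntegral.continuousOn_primitive (hβ.mono_set (Set.Icc_subset_Icc hc0 le_rfl))
    have hH0 : H c = 0 := by simp [hH]
    have hcw : ContinuousWithinAt H (Set.Icc c T) c := hHc c ⟨le_rfl, hlt.le⟩
    have hev : ∀ᶠ x in nhdsWithin c (Set.Icc c T), H x < 1 / 2 := by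
      have := hcw; rw [ContinuousWithinAt, hH0] at this
      exact this (Iio_mem_nhds one_half_pos)
    haveI : (nhdsWithin c (Set.Ioc c T)).NeBot := left_nhdsWithin_Ioc_neBot hlt
    obtain ⟨d, hdH, hd⟩ :=
      ((hev.filter_mono (nhdsWithin_mono c Set.Ioc_subset_Icc_self)).and
        eventually_mem_nhdsWithin).exists
    -- maximum of g on [c, d]
    have hsub : Set.Icc c d ⊆ Set.Icc (0:ℝ) T := Set.Icc_subset_Icc hc0 hd.2
    obtain ⟨t₀, ht₀mem, ht₀max⟩ :=
      isCompact_Icc.exists_isMaxOn (Set.nonempty_Icc.2 hd.1.le) (hgc.mono hsub)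
    have ht₀T : t₀ ∈ Set.Icc (0:ℝ) T := hsub ht₀mem
    have hM0 : 0 ≤ g t₀ := hgnn t₀ ht₀T
    have hβg_ii : ∀ a b, a ∈ Set.Icc (0:ℝ) T → b ∈ Set.Icc (0:ℝ) T → a ≤ b →
        IntervalIntegrable (fun s => β s * g s) volume a b := by
      intro a b ha hb hab
      rw [intervalIntegrable_iff_integrableOn_Ioc_of_le hab]
      exact hβg.mono_set
        (Set.Ioc_subset_Icc_self.trans (Set.Icc_subset_Icc ha.1 hb.2))
    have hβ_ii : ∀ a b, a ∈ Set.Icc (0:ℝ) T → b ∈ Set.Icc (0:ℝ) T → a ≤ b →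
        IntervalIntegrable β volume a b := by
      intro a b ha hb hab
      rw [intervalIntegrable_iff_integrableOn_Ioc_of_le hab]
      exact hβ.mono_set
        (Set.Ioc_subset_Icc_self.trans (Set.Icc_subset_Icc ha.1 hb.2))
    have hcmem : c ∈ Set.Icc (0:ℝ) T := ⟨hc0, hcT⟩
    have hdmem : d ∈ Set.Icc (0:ℝ) T := ⟨hc0.trans hd.1.le, hd.2⟩
    have hkey : g t₀ ≤ 1 / 2 * g t₀ := by
      have h1 := hineq t₀ ht₀T
      have split : (∫ s in (0:ℝ)..t₀, β s * g s)
          = (∫ s in (0:ℝ)..c, β s * g s) + ∫ s in c..t₀, β s * g s :=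
        (intervalIntegral.integral_add_adjacent_intervals
          (hβg_ii 0 c ⟨le_rfl, hT⟩ hcmem hc0)
          (hβg_ii c t₀ hcmem ht₀T ht₀mem.1)).symm
      have hsecond : (∫ s in c..t₀, β s * g s) ≤ ∫ s in c..t₀, β s * g t₀ := by
        apply intervalIntegral.integral_mono_on ht₀mem.1
          (hβg_ii c t₀ hcmem ht₀T ht₀mem.1)
          ((hβ_ii c t₀ hcmem ht₀T ht₀mem.1).mul_const (g t₀))
        intro s hs
        exact mul_le_mul_of_nonneg_left (ht₀max ⟨hs.1, hs.2.trans ht₀mem.2⟩) (hβnn s)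
      have hthird : (∫ s in c..t₀, β s * g t₀) = (∫ s in c..t₀, β s) * g t₀ :=
        intervalIntegral.integral_mul_const _ _
      have hfourth : (∫ s in c..t₀, β s) ≤ H d := by
        have he : H d = ∫ s in c..d, β s :=
          (intervalIntegral.integral_of_le hd.1.le).symm
        rw [he, ← intervalIntegral.integral_add_adjacent_intervals
          (hβ_ii c t₀ hcmem ht₀T ht₀mem.1) (hβ_ii t₀ d ht₀T hdmem ht₀mem.2)]
        have hnn : 0 ≤ ∫ s in t₀..d, β s :=
          intervalIntegral.integral_nonneg ht₀mem.2 fun u _ => hβnn u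
        linarith
      have hfifth : (∫ s in c..t₀, β s) * g t₀ ≤ 1 / 2 * g t₀ :=
        mul_le_mul_of_nonneg_right (hfourth.trans hdH.le) hM0
      calc g t₀ ≤ ∫ s in (0:ℝ)..t₀, β s * g s := h1
        _ = (∫ s in (0:ℝ)..c, β s * g s) + ∫ s in c..t₀, β s * g s := split
        _ = ∫ s in c..t₀, β s * g s := by rw [hint0, zero_add]
        _ ≤ ∫ s in c..t₀, β s * g t₀ := hsecond
        _ = (∫ s in c..t₀, β s) * g t₀ := hthird
        _ ≤ 1 / 2 * g t₀ := hfifth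
    have hMzero : g t₀ = 0 := by linarith
    have hdA : d ∈ A := by
      refine ⟨hdmem, fun s hs => ?_⟩
      by_cases h : s ≤ c
      · exact hcA.2 s ⟨hs.1, h⟩
      · push_neg at h
        have hs' : s ∈ Set.Icc c d := ⟨h.le, hs.2⟩
        exact le_antisymm (hMzero ▸ ht₀max hs') (hgnn s (hsub hs'))
    exact absurd (le_csSup bddA hdA) (not_le.2 hd.1)
  intro t ht
  exact hcA.2 t ⟨ht.1, by rw [hceq]; exact ht.2⟩

/-- Uniqueness of solutions of the perturbed sweeping process
`ẋ(t) ∈ Φ(x(t),t) - N_{x(t)}𝒳(t)`, `x(t) ∈ 𝒳(t)`: if `Φ(·,t)` is `γ(t)`-Lipschitz with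
`γ` integrable, the sets `𝒳(t)` are nonempty closed convex, and `x₁, x₂` are two
absolutely continuous solutions with the same initial condition, then `x₁ = x₂` on `[0,T]`. -/
theorem sweeping_process_uniqueness
    {n : ℕ} (T : ℝ) (hT : 0 < T)
    (Φ : EuclideanSpace ℝ (Fin n) → ℝ → EuclideanSpace ℝ (Fin n))
    (γ : ℝ → ℝ)
    (𝒳 : ℝ → Set (EuclideanSpace ℝ (Fin n)))
    (x₁ x₂ x₁' x₂' : ℝ → EuclideanSpace ℝ (Fin n))
    (hΦmeas : ∀ x, Measurable (fun t => Φ x t))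
    (hγpos : ∀ t, 0 ≤ γ t) (hγint : IntegrableOn γ (Set.Icc 0 T))
    (hΦlip : ∀ t ∈ Set.Icc (0:ℝ) T, ∀ x y, ‖Φ x t - Φ y t‖ ≤ γ t * ‖x - y‖)
    (h𝒳 : ∀ t ∈ Set.Icc (0:ℝ) T, (𝒳 t).Nonempty ∧ IsClosed (𝒳 t) ∧ Convex ℝ (𝒳 t))
    -- x₁ is an absolutely continuous solution:
    (h₁cont : ContinuousOn x₁ (Set.Icc 0 T))
    (h₁int : IntegrableOn x₁' (Set.Icc 0 T))
    (h₁ftc : ∀ t ∈ Set.Icc (0:ℝ) T, x₁ t = x₁ 0 + ∫ τ in (0:ℝ)..t, x₁' τ)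
    (h₁mem : ∀ t ∈ Set.Icc (0:ℝ) T, x₁ t ∈ 𝒳 t)
    (h₁sol : ∀ᵐ t ∂(volume.restrict (Set.Icc (0:ℝ) T)),
      HasDerivAt x₁ (x₁' t) t ∧
      ∀ y ∈ 𝒳 t, ⟪Φ (x₁ t) t - x₁' t, y - x₁ t⟫ ≤ 0)
    -- x₂ is an absolutely continuous solution:
    (h₂cont : ContinuousOn x₂ (Set.Icc 0 T))
    (h₂int : IntegrableOn x₂' (Set.Icc 0 T))
    (h₂ftc : ∀ t ∈ Set.Icc (0:ℝ) T, x₂ t = x₂ 0 + ∫ τ in (0:ℝ)..t, x₂' τ)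
    (h₂mem : ∀ t ∈ Set.Icc (0:ℝ) T, x₂ t ∈ 𝒳 t)
    (h₂sol : ∀ᵐ t ∂(volume.restrict (Set.Icc (0:ℝ) T)),
      HasDerivAt x₂ (x₂' t) t ∧
      ∀ y ∈ 𝒳 t, ⟪Φ (x₂ t) t - x₂' t, y - x₂ t⟫ ≤ 0)
    (hinit : x₁ 0 = x₂ 0) :
    ∀ t ∈ Set.Icc (0:ℝ) T, x₁ t = x₂ t := by
  set d : ℝ → EuclideanSpace ℝ (Fin n) := fun s => x₁ s - x₂ s with hddef
  set v : ℝ → EuclideanSpace ℝ (Fin n) := fun s => x₁' s - x₂' s with hvdef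
  have hvInt : IntegrableOn v (Set.Icc 0 T) := h₁int.sub h₂int
  have h0mem : (0:ℝ) ∈ Set.Icc (0:ℝ) T := ⟨le_rfl, hT.le⟩
  have hii : ∀ (f : ℝ → EuclideanSpace ℝ (Fin n)), IntegrableOn f (Set.Icc 0 T) →
      ∀ a b, a ∈ Set.Icc (0:ℝ) T → b ∈ Set.Icc (0:ℝ) T → a ≤ b →
      IntervalIntegrable f volume a b := by
    intro f hf a b ha hb hab
    rw [intervalIntegrable_iff_integrableOn_Ioc_of_le hab]
    exact hf.mono_set (Set.Ioc_subset_Icc_self.trans (Set.Icc_subset_Icc ha.1 hb.2))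
  have hd_ftc : ∀ s ∈ Set.Icc (0:ℝ) T, d s = ∫ τ in (0:ℝ)..s, v τ := by
    intro s hs
    show x₁ s - x₂ s = _
    rw [h₁ftc s hs, h₂ftc s hs, hinit,
      intervalIntegral.integral_sub (hii _ h₁int 0 s h0mem hs hs.1)
        (hii _ h₂int 0 s h0mem hs hs.1)]
    abel
  have hdc : ContinuousOn d (Set.Icc 0 T) := h₁cont.sub h₂cont
  obtain ⟨C, hC⟩ : ∃ C, ∀ s ∈ Set.Icc (0:ℝ) T, ‖d s‖ ≤ C :=
    isCompact_Icc.exists_bound_of_continuousOn hdc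
  have hC0 : 0 ≤ C := (norm_nonneg _).trans (hC 0 h0mem)
  set g : ℝ → ℝ := fun s => ‖d s‖ ^ 2 with hgdef
  -- key identity from the Fubini lemma
  have hkey : ∀ u ∈ Set.Icc (0:ℝ) T, g u = 2 * ∫ s in (0:ℝ)..u, ⟪v s, d s⟫ := by
    intro u hu
    have h1 := sq_norm_primitive hu.1 (hvInt.mono_set (Set.Icc_subset_Icc le_rfl hu.2))
    rw [← hd_ftc u hu] at h1
    show ‖d u‖ ^ 2 = _
    rw [h1]
    congr 1
    rw [intervalIntegral.integral_of_le hu.1, intervalIntegral.integral_of_le hu.1]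
    apply integral_congr_ae
    filter_upwards [ae_restrict_mem measurableSet_Ioc] with s hs
    rw [← hd_ftc s ⟨hs.1.le, hs.2.trans hu.2⟩]
  -- a.e. differential inequality
  have hae : ∀ᵐ s ∂(volume.restrict (Set.Icc (0:ℝ) T)), ⟪v s, d s⟫ ≤ γ s * g s := by
    filter_upwards [h₁sol, h₂sol, ae_restrict_mem measurableSet_Icc]
      with s hs1 hs2 hsmem
    have hA := hs1.2 (x₂ s) (h₂mem s hsmem)
    have hB := hs2.2 (x₁ s) (h₁mem s hsmem)
    have hlip := hΦlip s hsmem (x₁ s) (x₂ s)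
    have hds : d s = x₁ s - x₂ s := rfl
    have hvs : v s = x₁' s - x₂' s := rfl
    have hA' : ⟪x₁' s - Φ (x₁ s) s, d s⟫ ≤ 0 := by
      have hx : x₂ s - x₁ s = -(d s) := by rw [hds]; abel
      rw [hx, inner_neg_right] at hA
      have h2 : x₁' s - Φ (x₁ s) s = -(Φ (x₁ s) s - x₁' s) := by abel
      rw [h2, inner_neg_left]; linarith
    have hB' : ⟪Φ (x₂ s) s - x₂' s, d s⟫ ≤ 0 := by rw [hds]; exact hB
    have hinle : ⟪Φ (x₁ s) s - Φ (x₂ s) s, d s⟫ ≤ γ s * g s := by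
      have h1 := real_inner_le_norm (Φ (x₁ s) s - Φ (x₂ s) s) (d s)
      have h2 : ‖Φ (x₁ s) s - Φ (x₂ s) s‖ * ‖d s‖ ≤ (γ s * ‖x₁ s - x₂ s‖) * ‖d s‖ :=
        mul_le_mul_of_nonneg_right hlip (norm_nonneg _)
      have h3 : g s = ‖d s‖ ^ 2 := rfl
      rw [← hds] at h2
      nlinarith [norm_nonneg (d s), hγpos s]
    have hsplit : ⟪v s, d s⟫ = ⟪x₁' s - Φ (x₁ s) s, d s⟫
        + ⟪Φ (x₁ s) s - Φ (x₂ s) s, d s⟫ + ⟪Φ (x₂ s) s - x₂' s, d s⟫ := by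
      rw [hvs]
      simp only [inner_sub_left]
      ring
    linarith
  -- integrability facts
  have hg_meas : AEStronglyMeasurable g (volume.restrict (Set.Icc (0:ℝ) T)) :=
    ((hdc.norm.pow 2).aestronglyMeasurable measurableSet_Icc)
  have hvd_int : IntegrableOn (fun s => ⟪v s, d s⟫) (Set.Icc 0 T) := by
    refine Integrable.mono (hvInt.norm.mul_const C)
      (hvInt.aestronglyMeasurable.inner (hdc.aestronglyMeasurable measurableSet_Icc)) ?_
    filter_upwards [ae_restrict_mem measurableSet_Icc] with s hs
    rw [Real.norm_of_nonneg (by positivity : (0:ℝ) ≤ ‖v s‖ * C), Real.norm_eq_abs]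
    exact (abs_real_inner_le_norm _ _).trans
      (mul_le_mul_of_nonneg_left (hC s hs) (norm_nonneg _))
  have hγg_int : IntegrableOn (fun s => γ s * g s) (Set.Icc 0 T) := by
    refine Integrable.mono (hγint.const_mul (C ^ 2))
      (hγint.aestronglyMeasurable.mul hg_meas) ?_
    filter_upwards [ae_restrict_mem measurableSet_Icc] with s hs
    have hb : g s ≤ C ^ 2 := by
      have := hC s hs
      have h0 : g s = ‖d s‖ ^ 2 := rfl
      nlinarith [norm_nonneg (d s)]
    have hg0 : 0 ≤ g s := by positivity
    rw [Real.norm_of_nonneg (mul_nonneg (hγpos s) hg0),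
      Real.norm_of_nonneg (mul_nonneg (pow_nonneg hC0 2) (hγpos s))]
    calc γ s * g s ≤ γ s * C ^ 2 := mul_le_mul_of_nonneg_left hb (hγpos s)
      _ = C ^ 2 * γ s := mul_comm _ _
  have hvd_ii : ∀ u ∈ Set.Icc (0:ℝ) T, IntervalIntegrable (fun s => ⟪v s, d s⟫) volume 0 u := by
    intro u hu
    rw [intervalIntegrable_iff_integrableOn_Ioc_of_le hu.1]
    exact hvd_int.mono_set (Set.Ioc_subset_Icc_self.trans (Set.Icc_subset_Icc le_rfl hu.2))
  have hγg_ii : ∀ u ∈ Set.Icc (0:ℝ) T, IntervalIntegrable (fun s => γ s * g s) volume 0 u := by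
    intro u hu
    rw [intervalIntegrable_iff_integrableOn_Ioc_of_le hu.1]
    exact hγg_int.mono_set (Set.Ioc_subset_Icc_self.trans (Set.Icc_subset_Icc le_rfl hu.2))
  -- integral inequality for Grönwall
  have hineq : ∀ u ∈ Set.Icc (0:ℝ) T, g u ≤ ∫ s in (0:ℝ)..u, (2 * γ s) * g s := by
    intro u hu
    rw [hkey u hu]
    have hmono : (∫ s in (0:ℝ)..u, ⟪v s, d s⟫) ≤ ∫ s in (0:ℝ)..u, γ s * g s := by
      refine intervalIntegral.integral_mono_ae_restrict hu.1 (hvd_ii u hu) (hγg_ii u hu) ?_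
      exact ae_restrict_of_ae_restrict_of_subset (Set.Icc_subset_Icc le_rfl hu.2) hae
    have he : (∫ s in (0:ℝ)..u, (2 * γ s) * g s) = 2 * ∫ s in (0:ℝ)..u, γ s * g s := by
      rw [← intervalIntegral.integral_const_mul]
      congr 1
      ext s
      ring
    rw [he]
    linarith
  -- Grönwall
  have hzero := gronwall_zero hT.le (g := g) (fun s _ => by positivity) (hdc.norm.pow 2)
    (fun s => mul_nonneg (by norm_num) (hγpos s))
    (hγint.const_mul 2)
    (by
      have : (fun s => (2 * γ s) * g s) = fun s => 2 * (γ s * g s) := by ext s; ring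
      rw [this]
      exact hγg_int.const_mul 2)
    hineq
  intro t ht
  have hgt : g t = 0 := hzero t ht
  have : ‖d t‖ = 0 := by
    have h0 : g t = ‖d t‖ ^ 2 := rfl
    nlinarith [norm_nonneg (d t)]
  have hdt : d t = 0 := norm_eq_zero.1 this
  have : x₁ t - x₂ t = 0 := hdt
  exact sub_eq_zero.1 this
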